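/- arXiv:2212.03632 — 3 statements merged into one kernel-verified Lean document; each statement's English description precedes it below -/
import Mathlib

section
/- Let (Ω, 𝓕, P) be a probability space, (𝓕_t)_{t ≥ 0} a filtration on Ω, S a measurable space, and Z : [0,∞) × Ω → S a progressively measurable process adapted to (𝓕_t). For each t ≥ 0 let P_t be a Markov kernel on S, and write (P_t f)(z) = ∫ f(y) P_t(z, dy). Assume: (i) the Markov property: for all s, t ≥ 0 and all bounded measurable f : S → ℝ, E[f(Z_{s+t}) | 𝓕_s] = (P_t f)(Z_s) P-almost surely; (ii) τ : Ω → [0,∞) is a stopping time with respect to (𝓕_t) with E[τ] < ∞; and (iii) for every t ≥ 0 and every bounded measurable f : S → ℝ, E[∫₀ᵗ f(Z_{τ+s}) ds] = E[∫₀ᵗ f(Z_s) ds]. Define the finite measure μ on S by μ(A) = E[∫₀^τ 1_A(Z_s) ds] (equivalently, μ is the pushforward under (s, ω) ↦ Z_s(ω) of the restriction of the product of Lebesgue measure and P to {(s, ω) : s < τ(ω)}). Then μ is invariant for each P_t: for every t ≥ 0 and every bounded measurable f : S → ℝ, ∫ (P_t f) dμ = ∫ f dμ. In particular, if E[τ]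 > 0 then μ / μ(S) is a stationary probability measure for the semigroup (P_t). -/
open MeasureTheory ProbabilityTheory Set

/-- **Stationarity of the occupation measure up to a stopping time.**
Let `Z` be a progressively measurable process with values in `S`, adapted to a
filtration `ℱ`, satisfying the Markov property w.r.t. a family of Markov kernels
`κ t`.  Let `τ` be an integrable stopping time such that the post-`τ` process has
the same time-averaged law as the original process.  Then the occupation measure
`μ(A) = E[∫₀^τ 1_A(Z_s) ds]` (realised as the pushforward under `(s, ω) ↦ Z s ω`
of the product of Lebesgue measure and `P` restricted to `{(s, ω) : 0 ≤ s < τ ω}`)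
is invariant for each kernel `κ t`; if moreover `E[τ] > 0`, the normalisation of `μ`
is a stationary probability measure for the semigroup. -/
theorem occupation_measure_up_to_stopping_time_stationary
    {Ω : Type*} {m0 : MeasurableSpace Ω} (P : Measure Ω) [IsProbabilityMeasure P]
    (ℱ : Filtration ℝ m0)
    {S : Type*} [MeasurableSpace S]
    (Z : ℝ → Ω → S)
    -- adaptedness
    (hadapted : ∀ t : ℝ, Measurable[ℱ t] (Z t))
    -- progressive measurability
    (hprog : ∀ t : ℝ,
      Measurable[MeasurableSpace.prod
          (inferInstanceAs (MeasurableSpace (Set.Iic t))) (ℱ t)]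
        (fun p : Set.Iic t × Ω => Z (p.1 : ℝ) p.2))
    (κ : ℝ → Kernel S S) (hκ : ∀ t, IsMarkovKernel (κ t))
    -- (i) Markov property
    (hMarkov : ∀ s t : ℝ, 0 ≤ s → 0 ≤ t → ∀ f : S → ℝ, Measurable f →
      (∃ C, ∀ y, |f y| ≤ C) →
      P[(fun ω => f (Z (s + t) ω)) | ℱ s]
        =ᵐ[P] fun ω => ∫ y, f y ∂(κ t (Z s ω)))
    -- (ii) integrable stopping time
    (τ : Ω → ℝ) (hτ : IsStoppingTime ℱ (fun ω => (τ ω : WithTop ℝ))) (hτ0 : ∀ ω, 0 ≤ τ ω)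
    (hτint : Integrable τ P)
    -- (iii) time-shift invariance at τ
    (hshift : ∀ t ≥ (0 : ℝ), ∀ f : S → ℝ, Measurable f → (∃ C, ∀ y, |f y| ≤ C) →
      ∫ ω, (∫ s in (0 : ℝ)..t, f (Z (τ ω + s) ω)) ∂P
        = ∫ ω, (∫ s in (0 : ℝ)..t, f (Z s ω)) ∂P)
    -- the occupation measure
    (μ : Measure S)
    (hμ : μ = Measure.map (fun p : ℝ × Ω => Z p.1 p.2)
        ((volume.prod P).restrict {p : ℝ × Ω | 0 ≤ p.1 ∧ p.1 < τ p.2})) :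
    (∀ t ≥ (0 : ℝ), ∀ f : S → ℝ, Measurable f → (∃ C, ∀ y, |f y| ≤ C) →
      ∫ z, (∫ y, f y ∂(κ t z)) ∂μ = ∫ z, f z ∂μ) ∧
    ((0 < ∫ ω, τ ω ∂P) →
      IsProbabilityMeasure ((μ Set.univ)⁻¹ • μ) ∧
      ∀ t ≥ (0 : ℝ), ((μ Set.univ)⁻¹ • μ).bind (κ t) = (μ Set.univ)⁻¹ • μ) := by
  classical
  set R : Set (ℝ × Ω) := {p : ℝ × Ω | 0 ≤ p.1 ∧ p.1 < τ p.2} with hRdef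
  have hτm : Measurable τ := by
    apply measurable_of_Iic
    intro x
    have hx := hτ x
    simp only [WithTop.coe_le_coe] at hx
    exact ℱ.le x _ hx
  -- global joint measurability of the process
  have hZmeas : Measurable (fun p : ℝ × Ω => Z p.1 p.2) := by
    intro A hA
    have key : ∀ n : ℕ, MeasurableSet
        (((fun p : ℝ × Ω => Z p.1 p.2) ⁻¹' A) ∩ (Set.Iic (n : ℝ) ×ˢ (Set.univ : Set Ω))) := by
      intro n
      have hr : @Measurable (ℝ × Ω) (Set.Iic (n : ℝ) × Ω) _
          (MeasurableSpace.prod (inferInstanceAs (MeasurableSpace (Set.Iic (n : ℝ)))) (ℱ n))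
          (fun p => (⟨min p.1 (n : ℝ), Set.mem_Iic.mpr (min_le_right _ _)⟩, p.2)) := by
        refine Measurable.prodMk (β := Set.Iic (n : ℝ)) (γ := Ω) ?_ ?_
        · exact Measurable.subtype_mk (measurable_fst.min measurable_const)
        · exact measurable_snd.mono le_rfl (ℱ.le n)
      have hcomp : Measurable (fun p : ℝ × Ω => Z (min p.1 (n : ℝ)) p.2) := (hprog n).comp hr
      have heq : (((fun p : ℝ × Ω => Z p.1 p.2) ⁻¹' A) ∩ (Set.Iic (n : ℝ) ×ˢ Set.univ))
          = (((fun p : ℝ × Ω => Z (min p.1 (n : ℝ)) p.2) ⁻¹' A) ∩ (Set.Iic (n : ℝ) ×ˢ Set.univ)) := by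
        ext p
        simp only [mem_inter_iff, mem_preimage, mem_prod, mem_Iic, mem_univ, and_true]
        constructor
        · rintro ⟨h1, h2⟩; rw [min_eq_left h2]; exact ⟨h1, h2⟩
        · rintro ⟨h1, h2⟩; rw [min_eq_left h2] at h1; exact ⟨h1, h2⟩
      rw [heq]
      exact (hcomp hA).inter (measurableSet_Iic.prod MeasurableSet.univ)
    have hun : (fun p : ℝ × Ω => Z p.1 p.2) ⁻¹' A
        = ⋃ n : ℕ, (((fun p : ℝ × Ω => Z p.1 p.2) ⁻¹' A) ∩ (Set.Iic (n : ℝ) ×ˢ Set.univ)) := by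
      ext p
      simp only [mem_iUnion, mem_inter_iff, mem_preimage, mem_prod, mem_Iic, mem_univ, and_true]
      constructor
      · intro h; obtain ⟨n, hn⟩ := exists_nat_ge p.1; exact ⟨n, h, hn⟩
      · rintro ⟨n, h, _⟩; exact h
    rw [hun]
    exact MeasurableSet.iUnion key
  have hRm : MeasurableSet R :=
    (measurableSet_le measurable_const measurable_fst).inter
      (measurableSet_lt measurable_fst (hτm.comp measurable_snd))
  -- measure of R
  have hRmeasure : (volume.prod P) R = ENNReal.ofReal (∫ ω, τ ω ∂P) := by
    rw [Measure.prod_apply_symm hRm]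
    have hsec : ∀ ω, ((fun s : ℝ => (s, ω)) ⁻¹' R) = Set.Ico 0 (τ ω) := by
      intro ω; ext s; simp [hRdef]
    have : (fun ω => volume ((fun s : ℝ => (s, ω)) ⁻¹' R))
        = fun ω => ENNReal.ofReal (τ ω) := by
      funext ω; rw [hsec ω, Real.volume_Ico, sub_zero]
    rw [this, ← ofReal_integral_eq_lintegral_ofReal hτint (ae_of_all _ hτ0)]
  have hRfin : (volume.prod P) R < ⊤ := by
    rw [hRmeasure]; exact ENNReal.ofReal_lt_top
  -- occupation integral as product integral
  have hmap : ∀ h : S → ℝ, Measurable h →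
      ∫ z, h z ∂μ = ∫ p, R.indicator (fun p : ℝ × Ω => h (Z p.1 p.2)) p ∂(volume.prod P) := by
    intro h hh
    rw [hμ, integral_map hZmeas.aemeasurable hh.aestronglyMeasurable,
      ← integral_indicator hRm]
  -- main invariance statement
  have main : ∀ t ≥ (0 : ℝ), ∀ f : S → ℝ, Measurable f → (∃ C, ∀ y, |f y| ≤ C) →
      ∫ z, (∫ y, f y ∂(κ t z)) ∂μ = ∫ z, f z ∂μ := by
    intro t ht f hf hfC
    obtain ⟨C₀, hC₀⟩ := hfC
    have hC : ∀ y, |f y| ≤ max C₀ 0 := fun y => (hC₀ y).trans (le_max_left _ _)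
    set C := max C₀ 0 with hCdef
    have hC0 : (0 : ℝ) ≤ C := le_max_right _ _
    haveI := hκ t
    -- the function z ↦ ∫ f dκ_t(z)
    set g : S → ℝ := fun z => ∫ y, f y ∂(κ t z) with hg
    have hgm : Measurable g := by
      have : StronglyMeasurable (Function.uncurry fun (_ : S) (y : S) => f y) :=
        hf.stronglyMeasurable.comp_measurable measurable_snd
      exact this.integral_kernel_prod_right.measurable
    have hgC : ∀ z, |g z| ≤ C := by
      intro z
      rw [← Real.norm_eq_abs]
      calc ‖g z‖ ≤ C * ((κ t z) Set.univ).toReal :=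
            norm_integral_le_of_norm_le_const (ae_of_all _ fun y => by
              rw [Real.norm_eq_abs]; exact hC y)
        _ = C := by simp
    -- integrability of truncated bounded functionals on the product space
    have hintind : ∀ (R' : Set (ℝ × Ω)), MeasurableSet R' → (volume.prod P) R' < ⊤ →
        ∀ (Φ : ℝ × Ω → ℝ), Measurable Φ → (∀ p, |Φ p| ≤ C) →
        Integrable (R'.indicator Φ) (volume.prod P) := by
      intro R' hR'm hR'fin Φ hΦ hΦC
      refine Integrable.mono' (g := R'.indicator fun _ => C) ((integrable_indicator_iff hR'm).2
        (integrableOn_const hR'fin.ne))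
        ((hΦ.indicator hR'm).aestronglyMeasurable) (ae_of_all _ ?_)
      intro p
      rw [Real.norm_eq_abs]
      by_cases hp : p ∈ R'
      · rw [Set.indicator_of_mem hp, Set.indicator_of_mem hp]; exact hΦC p
      · rw [Set.indicator_of_notMem hp, Set.indicator_of_notMem hp]; simp
    have hΦg : Measurable (fun p : ℝ × Ω => g (Z p.1 p.2)) := hgm.comp hZmeas
    have hΦft : Measurable (fun p : ℝ × Ω => f (Z (p.1 + t) p.2)) :=
      hf.comp (hZmeas.comp ((measurable_fst.add_const t).prodMk measurable_snd))
    have hΦf0 : Measurable (fun p : ℝ × Ω => f (Z p.1 p.2)) := hf.comp hZmeas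
    have hIg : Integrable (R.indicator (fun p : ℝ × Ω => g (Z p.1 p.2))) (volume.prod P) :=
      hintind R hRm hRfin _ hΦg (fun p => hgC _)
    have hIft : Integrable (R.indicator (fun p : ℝ × Ω => f (Z (p.1 + t) p.2))) (volume.prod P) :=
      hintind R hRm hRfin _ hΦft (fun p => hC _)
    have hIf0 : Integrable (R.indicator (fun p : ℝ × Ω => f (Z p.1 p.2))) (volume.prod P) :=
      hintind R hRm hRfin _ hΦf0 (fun p => hC _)
    -- sections of the process are measurable
    have hsec : ∀ ω, Measurable (fun s : ℝ => Z s ω) :=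
      fun ω => hZmeas.comp measurable_prodMk_right
    have hZt : ∀ s : ℝ, Measurable (Z s) := fun s => (hadapted s).mono (ℱ.le s) le_rfl
    -- Step A: conditional expectation step, fixed time s
    have hinner : ∀ s : ℝ,
        (∫ ω, R.indicator (fun p : ℝ × Ω => g (Z p.1 p.2)) (s, ω) ∂P)
        = ∫ ω, R.indicator (fun p : ℝ × Ω => f (Z (p.1 + t) p.2)) (s, ω) ∂P := by
      intro s
      by_cases hs : 0 ≤ s
      · have e1 : ∀ Φ : ℝ × Ω → ℝ, (fun ω => R.indicator Φ (s, ω))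
            = ({ω | τ ω ≤ s}ᶜ).indicator (fun ω => Φ (s, ω)) := by
          intro Φ; funext ω
          have hmem : ((s, ω) ∈ R) ↔ (ω ∈ {ω | τ ω ≤ s}ᶜ) := by
            simp only [hRdef, Set.mem_setOf_eq, Set.mem_compl_iff, not_le]
            exact ⟨fun h => h.2, fun h => ⟨hs, h⟩⟩
          by_cases hω : (s, ω) ∈ R
          · rw [Set.indicator_of_mem hω, Set.indicator_of_mem (hmem.1 hω)]
          · rw [Set.indicator_of_notMem hω, Set.indicator_of_notMem (fun h => hω (hmem.2 h))]
        have hAs : MeasurableSet[ℱ s] ({ω | τ ω ≤ s}ᶜ) := by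
          have hx := hτ s
          simp only [WithTop.coe_le_coe] at hx
          exact hx.compl
        have hAm : MeasurableSet ({ω | τ ω ≤ s}ᶜ) := ℱ.le s _ hAs
        have hfst : Integrable (fun ω => f (Z (s + t) ω)) P := by
          refine Integrable.mono' (integrable_const C)
            ((hf.comp (hZt (s + t))).aestronglyMeasurable) (ae_of_all _ fun ω => ?_)
          rw [Real.norm_eq_abs]; exact hC _
        haveI : SigmaFinite (P.trim (ℱ.le s)) := by infer_instance
        rw [e1, e1, integral_indicator hAm, integral_indicator hAm]
        have hcond := hMarkov s t hs ht f hf ⟨C, hC⟩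
        calc ∫ ω in {ω | τ ω ≤ s}ᶜ, g (Z s ω) ∂P
            = ∫ ω in {ω | τ ω ≤ s}ᶜ, (P[(fun ω => f (Z (s + t) ω)) | ℱ s]) ω ∂P := by
              refine integral_congr_ae (ae_restrict_of_ae ?_)
              filter_upwards [hcond] with ω hω
              rw [hg]; exact hω.symm
          _ = ∫ ω in {ω | τ ω ≤ s}ᶜ, f (Z (s + t) ω) ∂P :=
              setIntegral_condExp (ℱ.le s) hfst hAs
      · have e0 : ∀ Φ : ℝ × Ω → ℝ, (fun ω => R.indicator Φ (s, ω)) = fun _ => (0 : ℝ) := by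
          intro Φ; funext ω
          exact Set.indicator_of_notMem (fun hmem => hs hmem.1) _
        rw [e0, e0]
    -- Step B: pathwise reduction of the inner time-integral to an interval integral
    have hBind : ∀ (Φ : ℝ × Ω → ℝ) (ω : Ω),
        (∫ s, R.indicator Φ (s, ω) ∂volume) = ∫ s in (0 : ℝ)..(τ ω), Φ (s, ω) := by
      intro Φ ω
      have h1 : (fun s : ℝ => R.indicator Φ (s, ω))
          = (Set.Ico (0 : ℝ) (τ ω)).indicator (fun s => Φ (s, ω)) := by
        funext s
        by_cases hmem : (s, ω) ∈ R
        · rw [Set.indicator_of_mem hmem, Set.indicator_of_mem (by exact hmem)]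
        · rw [Set.indicator_of_notMem hmem, Set.indicator_of_notMem (by exact hmem)]
      rw [h1, integral_indicator measurableSet_Ico, intervalIntegral.integral_of_le (hτ0 ω),
        setIntegral_congr_set Ico_ae_eq_Ioc]
    -- the Ioc-box for the fixed horizon t
    set Q : Set (ℝ × Ω) := (Set.Ioc (0 : ℝ) t) ×ˢ (Set.univ : Set Ω) with hQdef
    have hQm : MeasurableSet Q := measurableSet_Ioc.prod MeasurableSet.univ
    have hQfin : (volume.prod P) Q < ⊤ := by
      rw [hQdef, Measure.prod_prod]
      simp only [measure_univ, mul_one, Real.volume_Ioc]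
      exact ENNReal.ofReal_lt_top
    have hQind : ∀ (Φ : ℝ × Ω → ℝ) (ω : Ω),
        (∫ s, Q.indicator Φ (s, ω) ∂volume) = ∫ s in (0 : ℝ)..t, Φ (s, ω) := by
      intro Φ ω
      have h1 : (fun s : ℝ => Q.indicator Φ (s, ω))
          = (Set.Ioc (0 : ℝ) t).indicator (fun s => Φ (s, ω)) := by
        funext s
        by_cases hmem : s ∈ Set.Ioc (0 : ℝ) t
        · rw [Set.indicator_of_mem (show (s, ω) ∈ Q from ⟨hmem, trivial⟩),
            Set.indicator_of_mem hmem]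
        · rw [Set.indicator_of_notMem (fun h => hmem h.1), Set.indicator_of_notMem hmem]
      rw [h1, integral_indicator measurableSet_Ioc, intervalIntegral.integral_of_le ht]
    have hIQ : Integrable (Q.indicator (fun p : ℝ × Ω => f (Z p.1 p.2))) (volume.prod P) :=
      hintind Q hQm hQfin _ hΦf0 (fun p => hC _)
    -- interval integrability of the bounded paths
    have hFi : ∀ (ω : Ω) (a b : ℝ), IntervalIntegrable (fun s => f (Z s ω)) volume a b := by
      intro ω a b
      apply IntervalIntegrable.mono_fun' (g := fun _ => C) intervalIntegrable_const
        ((hf.comp (hsec ω)).aestronglyMeasurable.restrict)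
      exact ae_of_all _ fun s => by simpa [Real.norm_eq_abs] using hC (Z s ω)
    -- pathwise decomposition
    have hpath : ∀ ω, (∫ s in (0 : ℝ)..(τ ω), f (Z (s + t) ω))
        = (∫ s in (0 : ℝ)..(τ ω), f (Z s ω))
          + ((∫ s in (0 : ℝ)..t, f (Z (τ ω + s) ω)) - ∫ s in (0 : ℝ)..t, f (Z s ω)) := by
      intro ω
      set a := τ ω with ha
      have h1 : (∫ s in (0 : ℝ)..a, f (Z (s + t) ω)) = ∫ s in t..(a + t), f (Z s ω) := by
        rw [intervalIntegral.integral_comp_add_right (fun s => f (Z s ω)) t, zero_add]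
      have h2 : (∫ s in (0 : ℝ)..a, f (Z s ω)) + (∫ s in a..(a + t), f (Z s ω))
          = ∫ s in (0 : ℝ)..(a + t), f (Z s ω) :=
        intervalIntegral.integral_add_adjacent_intervals (hFi ω 0 a) (hFi ω a (a + t))
      have h3 : (∫ s in (0 : ℝ)..t, f (Z s ω)) + (∫ s in t..(a + t), f (Z s ω))
          = ∫ s in (0 : ℝ)..(a + t), f (Z s ω) :=
        intervalIntegral.integral_add_adjacent_intervals (hFi ω 0 t) (hFi ω t (a + t))
      have h4 : (∫ s in (0 : ℝ)..t, f (Z (τ ω + s) ω)) = ∫ s in a..(a + t), f (Z s ω) := by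
        have hc : ∀ s : ℝ, f (Z (τ ω + s) ω) = f (Z (s + a) ω) := by
          intro s; rw [ha, add_comm]
        simp only [hc]
        rw [intervalIntegral.integral_comp_add_right (fun s => f (Z s ω)) a, zero_add, add_comm t a]
      rw [h1, h4]
      linarith [h2, h3]
    -- integrable pieces
    have hB0int : Integrable
        (fun ω => ∫ s, R.indicator (fun p : ℝ × Ω => f (Z p.1 p.2)) (s, ω) ∂volume) P :=
      hIf0.integral_prod_right
    have hBtint : Integrable
        (fun ω => ∫ s, R.indicator (fun p : ℝ × Ω => f (Z (p.1 + t) p.2)) (s, ω) ∂volume) P :=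
      hIft.integral_prod_right
    have hWrep : (fun ω => ∫ s in (0 : ℝ)..t, f (Z s ω))
        = fun ω => ∫ s, Q.indicator (fun p : ℝ × Ω => f (Z p.1 p.2)) (s, ω) ∂volume :=
      funext fun ω => (hQind (fun p => f (Z p.1 p.2)) ω).symm
    have hWint : Integrable (fun ω => ∫ s in (0 : ℝ)..t, f (Z s ω)) P := by
      rw [hWrep]; exact hIQ.integral_prod_right
    have hYrep : (fun ω => ∫ s in (0 : ℝ)..t, f (Z (τ ω + s) ω))
        = fun ω => ((∫ s, R.indicator (fun p : ℝ × Ω => f (Z (p.1 + t) p.2)) (s, ω) ∂volume)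
            - (∫ s, R.indicator (fun p : ℝ × Ω => f (Z p.1 p.2)) (s, ω) ∂volume))
            + ∫ s in (0 : ℝ)..t, f (Z s ω) := by
      funext ω
      rw [hBind, hBind]
      have := hpath ω
      linarith [this]
    have hYint : Integrable (fun ω => ∫ s in (0 : ℝ)..t, f (Z (τ ω + s) ω)) P := by
      rw [hYrep]; exact (hBtint.sub hB0int).add hWint
    -- assemble
    calc ∫ z, (∫ y, f y ∂(κ t z)) ∂μ
        = ∫ p, R.indicator (fun p : ℝ × Ω => g (Z p.1 p.2)) p ∂(volume.prod P) := hmap g hgm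
      _ = ∫ s : ℝ, ∫ ω, R.indicator (fun p : ℝ × Ω => g (Z p.1 p.2)) (s, ω) ∂P :=
          integral_prod _ hIg
      _ = ∫ s : ℝ, ∫ ω, R.indicator (fun p : ℝ × Ω => f (Z (p.1 + t) p.2)) (s, ω) ∂P := by
          exact integral_congr_ae (ae_of_all _ fun s => hinner s)
      _ = ∫ p, R.indicator (fun p : ℝ × Ω => f (Z (p.1 + t) p.2)) p ∂(volume.prod P) :=
          (integral_prod _ hIft).symm
      _ = ∫ ω, ∫ s, R.indicator (fun p : ℝ × Ω => f (Z (p.1 + t) p.2)) (s, ω) ∂volume ∂P :=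
          integral_prod_symm _ hIft
      _ = ∫ ω, ((∫ s, R.indicator (fun p : ℝ × Ω => f (Z p.1 p.2)) (s, ω) ∂volume)
            + ((∫ s in (0 : ℝ)..t, f (Z (τ ω + s) ω)) - ∫ s in (0 : ℝ)..t, f (Z s ω))) ∂P := by
          refine integral_congr_ae (ae_of_all _ fun ω => ?_)
          simp only [hBind]
          exact hpath ω
      _ = (∫ ω, ∫ s, R.indicator (fun p : ℝ × Ω => f (Z p.1 p.2)) (s, ω) ∂volume ∂P)
            + ((∫ ω, (∫ s in (0 : ℝ)..t, f (Z (τ ω + s) ω)) ∂P)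
              - ∫ ω, (∫ s in (0 : ℝ)..t, f (Z s ω)) ∂P) := by
          have h6 : Integrable (fun ω => (∫ s in (0 : ℝ)..t, f (Z (τ ω + s) ω))
              - ∫ s in (0 : ℝ)..t, f (Z s ω)) P := hYint.sub hWint
          rw [integral_add hB0int h6, integral_sub hYint hWint]
      _ = ∫ ω, ∫ s, R.indicator (fun p : ℝ × Ω => f (Z p.1 p.2)) (s, ω) ∂volume ∂P := by
          rw [hshift t ht f hf ⟨C, hC⟩]; ring
      _ = ∫ p, R.indicator (fun p : ℝ × Ω => f (Z p.1 p.2)) p ∂(volume.prod P) :=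
          (integral_prod_symm _ hIf0).symm
      _ = ∫ z, f z ∂μ := (hmap f hf).symm
  refine ⟨main, ?_⟩
  -- Part 2
  intro hEτ
  have hμuniv : μ Set.univ = ENNReal.ofReal (∫ ω, τ ω ∂P) := by
    rw [hμ, Measure.map_apply hZmeas MeasurableSet.univ, Set.preimage_univ,
      Measure.restrict_apply_univ, hRmeasure]
  have hμne : μ Set.univ ≠ 0 := by
    rw [hμuniv]
    simpa using ENNReal.ofReal_pos.2 hEτ |>.ne'
  have hμfin : μ Set.univ ≠ ⊤ := by
    rw [hμuniv]; exact ENNReal.ofReal_ne_top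
  haveI : IsFiniteMeasure μ := ⟨lt_of_le_of_ne le_top hμfin⟩
  have hprob : IsProbabilityMeasure ((μ Set.univ)⁻¹ • μ) := by
    constructor
    rw [Measure.smul_apply, smul_eq_mul, ENNReal.inv_mul_cancel hμne hμfin]
  refine ⟨hprob, ?_⟩
  intro t ht
  haveI := hκ t
  have hkey : ∀ A : Set S, MeasurableSet A → ∫⁻ z, (κ t z) A ∂μ = μ A := by
    intro A hA
    have hmf : Measurable (A.indicator (fun _ => (1 : ℝ))) :=
      measurable_const.indicator hA
    have hbd : ∃ C, ∀ y, |A.indicator (fun _ => (1 : ℝ)) y| ≤ C := by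
      refine ⟨1, fun y => ?_⟩
      by_cases hy : y ∈ A
      · rw [Set.indicator_of_mem hy]; simp
      · rw [Set.indicator_of_notMem hy]; simp
    have h1 := main t ht _ hmf hbd
    have h2 : ∀ z, (∫ y, A.indicator (fun _ => (1 : ℝ)) y ∂(κ t z)) = ((κ t z) A).toReal := by
      intro z
      rw [integral_indicator_const (1 : ℝ) hA]; simp [Measure.real]
    have h3 : (∫ z, A.indicator (fun _ => (1 : ℝ)) z ∂μ) = (μ A).toReal := by
      rw [integral_indicator_const (1 : ℝ) hA]; simp [Measure.real]
    rw [h3] at h1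
    have h4 : (∫ z, ((κ t z) A).toReal ∂μ) = (∫⁻ z, (κ t z) A ∂μ).toReal := by
      refine integral_toReal ((Kernel.measurable_coe (κ t) hA).aemeasurable)
        (ae_of_all _ fun z => ?_)
      exact measure_lt_top _ _
    have h5 : (∫ z, (∫ y, A.indicator (fun _ => (1 : ℝ)) y ∂(κ t z)) ∂μ)
        = (∫⁻ z, (κ t z) A ∂μ).toReal := by
      rw [← h4]
      exact integral_congr_ae (ae_of_all _ fun z => h2 z)
    rw [h5] at h1
    have hfin1 : (∫⁻ z, (κ t z) A ∂μ) ≠ ⊤ := by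
      refine ne_of_lt (lt_of_le_of_lt ?_ (lt_of_le_of_ne le_top hμfin))
      calc (∫⁻ z, (κ t z) A ∂μ) ≤ ∫⁻ _, 1 ∂μ :=
            lintegral_mono fun z => prob_le_one
        _ = μ Set.univ := by simp
    exact (ENNReal.toReal_eq_toReal_iff' hfin1 (measure_ne_top μ A)).1 h1
  ext A hA
  rw [Measure.bind_apply hA (Kernel.measurable (κ t)).aemeasurable, lintegral_smul_measure, hkey A hA]
  simp
end

section
/- Let μ be a finite Borel measure on ℝ^d and let (u_N)_{N ∈ ℕ} be a sequence of continuous nonnegative Lebesgue-integrable functions on ℝ^d such that: (a) for every N and every Borel set A, ∫_A u_N dLeb ≤ ∫_A u_{N+1} dLeb ≤ μ(A); and (b) the total variation distance between μ and the measure with density u_N tends to 0 as N → ∞. Then: (i) u_N(x) ≤ u_{N+1}(x) for every x ∈ ℝ^d and every N; (ii) the pointwise limit u(x) := lim_{N → ∞} u_N(x) ∈ [0, ∞] is a lower semicontinuous function; and (iii) μ is absolutely continuous with respect to Lebesgue measure with density u, i.e. μ(A) = ∫_A u dLeb for every Borel set A ⊆ ℝ^d. -/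
open MeasureTheory Filter Topology

/-- **Monotone approximation by continuous densities yields a lower semicontinuous
density.**  If `μ` is a finite Borel measure on `ℝ^d` and `(u N)` is a sequence of
continuous nonnegative integrable functions such that `∫_A u_N ≤ ∫_A u_{N+1} ≤ μ A`
for all Borel `A`, and the total variation distance between `μ` and `u_N · Leb`
tends to `0`, then `(u N)` is pointwise nondecreasing, its pointwise limit
`u = ⨆ N, u N` (valued in `[0, ∞]`) is lower semicontinuous, and `μ = u · Leb`. -/
theorem lsc_density_of_monotone_tv_approximation
    (d : ℕ)
    (μ : Measure (EuclideanSpace ℝ (Fin d))) [IsFiniteMeasure μ]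
    (u : ℕ → EuclideanSpace ℝ (Fin d) → ℝ)
    (hcont : ∀ N, Continuous (u N))
    (hnonneg : ∀ N x, 0 ≤ u N x)
    (hint : ∀ N, Integrable (u N) volume)
    -- (a) monotone domination
    (hdom : ∀ N : ℕ, ∀ A : Set (EuclideanSpace ℝ (Fin d)), MeasurableSet A →
      (∫⁻ x in A, ENNReal.ofReal (u N x) ∂volume)
          ≤ (∫⁻ x in A, ENNReal.ofReal (u (N + 1) x) ∂volume) ∧
      (∫⁻ x in A, ENNReal.ofReal (u (N + 1) x) ∂volume) ≤ μ A)
    -- (b) convergence in total variation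
    (hTV : Tendsto
      (fun N => ⨆ (A : Set (EuclideanSpace ℝ (Fin d))) (_ : MeasurableSet A),
        ((μ A - ∫⁻ x in A, ENNReal.ofReal (u N x) ∂volume) ⊔
          ((∫⁻ x in A, ENNReal.ofReal (u N x) ∂volume) - μ A)))
      atTop (𝓝 0)) :
    -- (i) pointwise monotonicity
    (∀ N : ℕ, ∀ x, u N x ≤ u (N + 1) x) ∧
    -- (ii) the pointwise limit exists and is lower semicontinuous
    (∀ x, Tendsto (fun N => ENNReal.ofReal (u N x)) atTop
        (𝓝 (⨆ N, ENNReal.ofReal (u N x)))) ∧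
    LowerSemicontinuous (fun x => ⨆ N, ENNReal.ofReal (u N x)) ∧
    -- (iii) μ has density u with respect to Lebesgue measure
    (∀ A : Set (EuclideanSpace ℝ (Fin d)), MeasurableSet A →
      μ A = ∫⁻ x in A, (⨆ N, ENNReal.ofReal (u N x)) ∂volume) := by
  have hmono : ∀ N : ℕ, ∀ x, u N x ≤ u (N + 1) x := by
    intro N x
    by_contra hlt
    push_neg at hlt
    set c := (u N x - u (N + 1) x) / 2 with hc
    have hc0 : 0 < c := by simp [hc]; linarith
    set V := {y | c < u N y - u (N + 1) y} with hV
    have hVopen : IsOpen V := isOpen_lt continuous_const ((hcont N).sub (hcont (N + 1)))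
    have hxV : x ∈ V := by simp only [hV, Set.mem_setOf_eq, hc]; linarith
    have hVpos : 0 < volume V := hVopen.measure_pos volume ⟨x, hxV⟩
    have hVm : MeasurableSet V := hVopen.measurableSet
    have key : (∫⁻ y in V, ENNReal.ofReal (u (N + 1) y) ∂volume) + ENNReal.ofReal c * volume V
        ≤ ∫⁻ y in V, ENNReal.ofReal (u N y) ∂volume := by
      have h1 : (∫⁻ y in V, (ENNReal.ofReal (u (N + 1) y) + ENNReal.ofReal c) ∂volume)
          = (∫⁻ y in V, ENNReal.ofReal (u (N + 1) y) ∂volume) + ENNReal.ofReal c * volume V := by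
        rw [lintegral_add_right _ measurable_const, setLIntegral_const]
      rw [← h1]
      refine setLIntegral_mono ((ENNReal.measurable_ofReal.comp (hcont N).measurable)) ?_
      intro y hy
      rw [← ENNReal.ofReal_add (hnonneg (N + 1) y) hc0.le]
      exact ENNReal.ofReal_le_ofReal (by simp only [hV, Set.mem_setOf_eq] at hy; linarith)
    have hfin : (∫⁻ y in V, ENNReal.ofReal (u (N + 1) y) ∂volume) ≠ ⊤ :=
      ((setLIntegral_le_lintegral _ _).trans_lt (hint (N + 1)).lintegral_lt_top).ne
    have := key.trans (hdom N V hVm).1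
    have hzero : ENNReal.ofReal c * volume V ≤ 0 := by
      have h2 : (∫⁻ y in V, ENNReal.ofReal (u (N + 1) y) ∂volume) + ENNReal.ofReal c * volume V
          ≤ (∫⁻ y in V, ENNReal.ofReal (u (N + 1) y) ∂volume) + 0 := by simpa using this
      exact (ENNReal.add_le_add_iff_left hfin).mp h2
    have : volume V = 0 := by
      rcases mul_eq_zero.mp (le_antisymm hzero zero_le) with h | h
      · exact absurd h (by simp [ENNReal.ofReal_eq_zero, not_le, hc0])
      · exact h
    exact absurd this hVpos.ne'
  have hmonoE : ∀ x, Monotone fun N => ENNReal.ofReal (u N x) := fun x =>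
    monotone_nat_of_le_succ fun N => ENNReal.ofReal_le_ofReal (hmono N x)
  refine ⟨hmono, fun x => tendsto_atTop_iSup (hmonoE x), ?_, ?_⟩
  · exact lowerSemicontinuous_iSup fun N =>
      (ENNReal.continuous_ofReal.comp (hcont N)).lowerSemicontinuous
  · intro A hA
    set f : ℕ → ENNReal := fun N => ∫⁻ x in A, ENNReal.ofReal (u N x) ∂volume with hf
    have hfle : ∀ N, f N ≤ μ A := fun N => (hdom N A hA).1.trans (hdom N A hA).2
    have hRHS : (∫⁻ x in A, (⨆ N, ENNReal.ofReal (u N x)) ∂volume) = ⨆ N, f N := by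
      refine lintegral_iSup (fun N => ENNReal.measurable_ofReal.comp (hcont N).measurable) ?_
      exact monotone_nat_of_le_succ fun N x => ENNReal.ofReal_le_ofReal (hmono N x)
    rw [hRHS]
    refine le_antisymm ?_ (iSup_le hfle)
    refine ENNReal.le_of_forall_pos_le_add fun ε hε hlt => ?_
    have hev : ∀ᶠ N in atTop,
        (⨆ (A : Set (EuclideanSpace ℝ (Fin d))) (_ : MeasurableSet A),
          ((μ A - ∫⁻ x in A, ENNReal.ofReal (u N x) ∂volume) ⊔
            ((∫⁻ x in A, ENNReal.ofReal (u N x) ∂volume) - μ A))) < ε :=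
      hTV.eventually (Iio_mem_nhds (by exact_mod_cast hε))
    obtain ⟨N, hN⟩ := hev.exists
    have h1 : μ A - f N ≤ (ε : ENNReal) := by
      have h0 := le_iSup₂ (f := fun (B : Set (EuclideanSpace ℝ (Fin d))) (_ : MeasurableSet B) =>
        ((μ B - ∫⁻ x in B, ENNReal.ofReal (u N x) ∂volume) ⊔
          ((∫⁻ x in B, ENNReal.ofReal (u N x) ∂volume) - μ B))) A hA
      exact le_trans (le_trans le_sup_left h0) hN.le
    have h2 : μ A ≤ f N + ε := by
      have := tsub_le_iff_right.mp h1
      calc μ A ≤ (ε : ENNReal) + f N := this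
        _ = f N + ε := add_comm _ _
    exact h2.trans (add_le_add_left (le_iSup f N) _)
end

section
/- Let v¹, …, vⁿ : ℝ^d → ℝ^d be Lipschitz continuous vector fields and for each i let φⁱ : [0,∞) × ℝ^d → ℝ^d satisfy φⁱ(0, x) = x and ∂_t φⁱ(t, x) = vⁱ(φⁱ(t, x)) for all t ≥ 0, x ∈ ℝ^d. Let M ⊆ ℝ^d be a compact set which is forward invariant under each flow: φⁱ(t, x) ∈ M for every i, every x ∈ M and every t ≥ 0. Let λ₁, …, λₙ ≥ 0 with λ₁ + ⋯ + λₙ = 1, set v̄ = Σᵢ λᵢ vⁱ, and let φ̄ : [0,∞) × ℝ^d → ℝ^d satisfy φ̄(0, x) = x and ∂_t φ̄(t, x) = v̄(φ̄(t, x)) for all t ≥ 0, x ∈ ℝ^d. Then M is forward invariant under φ̄: φ̄(t, x) ∈ M for every x ∈ M and every t ≥ 0. -/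
open Set Real
open scoped NNReal

section helpers

variable {E : Type*} [NormedAddCommGroup E] [NormedSpace ℝ E]

lemma gronwallBound_le_aux {K ε t : ℝ} (hK : 0 ≤ K) (hε : 0 ≤ ε) (ht : 0 ≤ t) :
    gronwallBound 0 K ε t ≤ ε * t * exp (K * t) := by
  rcases eq_or_lt_of_le hK with hK0 | hKpos
  · rw [← hK0]
    have : gronwallBound 0 0 ε t = 0 + ε * t := by rw [gronwallBound_K0]
    rw [this]
    simp only [zero_mul, exp_zero, zero_add, mul_one]
    exact le_refl _
  · rw [gronwallBound_of_K_ne_0 (ne_of_gt hKpos)]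
    show 0 * exp (K * t) + ε / K * (exp (K * t) - 1) ≤ ε * t * exp (K * t)
    have h1 : exp (-(K * t)) * exp (K * t) = 1 := by
      rw [← exp_add]; simp
    have h2 : -(K * t) + 1 ≤ exp (-(K * t)) := add_one_le_exp _
    have h3 : (0:ℝ) < exp (K * t) := exp_pos _
    have key : exp (K * t) - 1 ≤ K * t * exp (K * t) := by nlinarith
    rw [zero_mul, zero_add, div_mul_eq_mul_div, div_le_iff₀ hKpos]
    have ht' : 0 ≤ ε * t * exp (K * t) := by positivity
    nlinarith

lemma sol_second_order {w : E → E} {K : ℝ≥0} (hw : LipschitzWith K w) {ψ : ℝ → E}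
    (hψ : ∀ t ∈ Ici (0:ℝ), HasDerivWithinAt ψ (w (ψ t)) (Ici (0:ℝ)) t)
    {s : ℝ} (hs : 0 ≤ s) :
    ‖ψ s - ψ 0 - s • w (ψ 0)‖ ≤ (K : ℝ) * ‖w (ψ 0)‖ * s ^ 2 * exp (K * s) := by
  set c := w (ψ 0) with hc
  have hψcont : ContinuousOn ψ (Icc 0 s) := fun t htmem =>
    ((hψ t (mem_of_mem_of_subset htmem Icc_subset_Ici_self)).continuousWithinAt).mono
      Icc_subset_Ici_self
  have key : ∀ t ∈ Icc (0:ℝ) s, ‖ψ t - ψ 0 - t • c‖ ≤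
      gronwallBound 0 K ((K : ℝ) * s * ‖c‖) (t - 0) := by
    apply norm_le_gronwallBound_of_norm_deriv_right_le
      (f' := fun t => w (ψ t) - c)
    · exact (hψcont.sub continuousOn_const).sub
        ((continuous_id.smul continuous_const).continuousOn)
    · intro t htmem
      have h1 : HasDerivWithinAt ψ (w (ψ t)) (Ici t) t :=
        (hψ t htmem.1).mono (Ici_subset_Ici.2 htmem.1)
      have h2 : HasDerivWithinAt (fun t : ℝ => t • c) c (Ici t) t := by
        simpa using ((hasDerivAt_id t).smul_const c).hasDerivWithinAt (s := Ici t)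
      exact (h1.sub_const (ψ 0)).sub h2
    · simp
    · intro t htmem
      have hd : ‖w (ψ t) - c‖ ≤ (K : ℝ) * ‖ψ t - ψ 0‖ := by
        have := hw.dist_le_mul (ψ t) (ψ 0)
        rw [dist_eq_norm, dist_eq_norm] at this
        exact this
      have htri : ‖ψ t - ψ 0‖ ≤ ‖ψ t - ψ 0 - t • c‖ + ‖t • c‖ := by
        simpa using norm_add_le (ψ t - ψ 0 - t • c) (t • c)
      have hts : ‖t • c‖ ≤ s * ‖c‖ := by
        rw [norm_smul, Real.norm_eq_abs, abs_of_nonneg htmem.1]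
        exact mul_le_mul_of_nonneg_right (le_of_lt htmem.2) (norm_nonneg _)
      calc ‖w (ψ t) - c‖ ≤ (K : ℝ) * ‖ψ t - ψ 0‖ := hd
        _ ≤ (K : ℝ) * (‖ψ t - ψ 0 - t • c‖ + s * ‖c‖) := by
            apply mul_le_mul_of_nonneg_left _ K.coe_nonneg
            exact le_trans htri (by linarith)
        _ = (K : ℝ) * ‖ψ t - ψ 0 - t • c‖ + (K : ℝ) * s * ‖c‖ := by ring
  have hfin := key s ⟨hs, le_refl s⟩
  rw [sub_zero] at hfin
  have hb := gronwallBound_le_aux (K := (K : ℝ)) (ε := (K : ℝ) * s * ‖c‖)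
    K.coe_nonneg (mul_nonneg (mul_nonneg K.coe_nonneg hs) (norm_nonneg _)) hs
  calc ‖ψ s - ψ 0 - s • c‖ ≤ gronwallBound 0 K ((K : ℝ) * s * ‖c‖) s := hfin
    _ ≤ ((K : ℝ) * s * ‖c‖) * s * exp (K * s) := hb
    _ = (K : ℝ) * ‖c‖ * s ^ 2 * exp (K * s) := by ring

lemma sol_contraction {w : E → E} {K : ℝ≥0} (hw : LipschitzWith K w) {f g : ℝ → E}
    (hf : ∀ t ∈ Ici (0:ℝ), HasDerivWithinAt f (w (f t)) (Ici (0:ℝ)) t)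
    (hg : ∀ t ∈ Ici (0:ℝ), HasDerivWithinAt g (w (g t)) (Ici (0:ℝ)) t)
    {s : ℝ} (hs : 0 ≤ s) :
    ‖f s - g s‖ ≤ ‖f 0 - g 0‖ * exp (K * s) := by
  have key : ∀ t ∈ Icc (0:ℝ) s, ‖f t - g t‖ ≤
      gronwallBound (‖f 0 - g 0‖) K 0 (t - 0) := by
    apply norm_le_gronwallBound_of_norm_deriv_right_le
      (f' := fun t => w (f t) - w (g t))
    · apply ContinuousOn.sub
      · exact fun t htmem => ((hf t (htmem.1)).continuousWithinAt).mono Icc_subset_Ici_self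
      · exact fun t htmem => ((hg t (htmem.1)).continuousWithinAt).mono Icc_subset_Ici_self
    · intro t htmem
      exact ((hf t htmem.1).mono (Ici_subset_Ici.2 htmem.1)).sub
        ((hg t htmem.1).mono (Ici_subset_Ici.2 htmem.1))
    · exact le_refl _
    · intro t htmem
      have := hw.dist_le_mul (f t) (g t)
      rw [dist_eq_norm, dist_eq_norm] at this
      linarith
  have hfin := key s ⟨hs, le_refl s⟩
  rwa [sub_zero, gronwallBound_ε0] at hfin

lemma sol_shift {w : E → E} {ψ : ℝ → E}
    (hψ : ∀ t ∈ Ici (0:ℝ), HasDerivWithinAt ψ (w (ψ t)) (Ici (0:ℝ)) t)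
    {c : ℝ} (hc : 0 ≤ c) :
    ∀ t ∈ Ici (0:ℝ), HasDerivWithinAt (fun s => ψ (c + s)) (w (ψ (c + t))) (Ici (0:ℝ)) t := by
  intro t ht
  have hct : c + t ∈ Ici (0:ℝ) := by
    simp only [mem_Ici] at ht ⊢; linarith
  have h1 : HasDerivWithinAt (fun s : ℝ => c + s) 1 (Ici 0) t := by
    simpa using (hasDerivWithinAt_id t (Ici (0:ℝ))).const_add c
  have hmaps : MapsTo (fun s : ℝ => c + s) (Ici 0) (Ici 0) := by
    intro a ha; simp only [mem_Ici] at ha ⊢; linarith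
  have h2 := (hψ (c + t) hct).scomp t h1 hmaps
  simpa [Function.comp_def] using h2

end helpers

set_option maxHeartbeats 2000000 in
/-- **Forward invariance under the averaged vector field.**
If a compact set `M ⊆ ℝ^d` is forward invariant under the flows of Lipschitz vector
fields `v 0, …, v (n-1)`, and `v̄ = Σ λᵢ vⁱ` is a convex combination of them, then `M`
is forward invariant under the flow of `v̄`. -/
theorem forward_invariance_of_averaged_flow
    (d n : ℕ)
    (v : Fin n → EuclideanSpace ℝ (Fin d) → EuclideanSpace ℝ (Fin d))
    (hv : ∀ i, ∃ L : NNReal, LipschitzWith L (v i))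
    (φ : Fin n → ℝ → EuclideanSpace ℝ (Fin d) → EuclideanSpace ℝ (Fin d))
    (hφ0 : ∀ i x, φ i 0 x = x)
    (hφt : ∀ i x, ∀ t ∈ Ici (0 : ℝ),
      HasDerivWithinAt (fun t' => φ i t' x) (v i (φ i t x)) (Ici (0 : ℝ)) t)
    (M : Set (EuclideanSpace ℝ (Fin d))) (hMc : IsCompact M)
    (hMinv : ∀ i, ∀ x ∈ M, ∀ t ≥ (0 : ℝ), φ i t x ∈ M)
    (lam : Fin n → ℝ) (hlam0 : ∀ i, 0 ≤ lam i) (hlam1 : ∑ i, lam i = 1)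
    (vbar : EuclideanSpace ℝ (Fin d) → EuclideanSpace ℝ (Fin d))
    (hvbar : ∀ x, vbar x = ∑ i, lam i • v i x)
    (φbar : ℝ → EuclideanSpace ℝ (Fin d) → EuclideanSpace ℝ (Fin d))
    (hφbar0 : ∀ x, φbar 0 x = x)
    (hφbart : ∀ x, ∀ t ∈ Ici (0 : ℝ),
      HasDerivWithinAt (fun t' => φbar t' x) (vbar (φbar t x)) (Ici (0 : ℝ)) t) :
    ∀ x ∈ M, ∀ t ≥ (0 : ℝ), φbar t x ∈ M := by
  classical
  -- a single Lipschitz constant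
  obtain ⟨K, hK⟩ : ∃ K : ℝ≥0, ∀ i, LipschitzWith K (v i) := by
    refine ⟨Finset.univ.sup fun i => Classical.choose (hv i), fun i => ?_⟩
    exact (Classical.choose_spec (hv i)).weaken
      (Finset.le_sup (f := fun i => Classical.choose (hv i)) (Finset.mem_univ i))
  have hlam_le_one : ∀ i, lam i ≤ 1 := by
    intro i
    rw [← hlam1]
    exact Finset.single_le_sum (fun j _ => hlam0 j) (Finset.mem_univ i)
  have hKbar : LipschitzWith K vbar := by
    apply LipschitzWith.of_dist_le_mul
    intro a b
    rw [dist_eq_norm, hvbar a, hvbar b, ← Finset.sum_sub_distrib]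
    calc ‖∑ i, (lam i • v i a - lam i • v i b)‖
        ≤ ∑ i, ‖lam i • v i a - lam i • v i b‖ := norm_sum_le _ _
      _ ≤ ∑ i, lam i * ((K : ℝ) * dist a b) := by
          apply Finset.sum_le_sum; intro i _
          rw [← smul_sub, norm_smul, Real.norm_eq_abs, abs_of_nonneg (hlam0 i)]
          have h1 := (hK i).dist_le_mul a b
          rw [dist_eq_norm] at h1
          rw [← dist_eq_norm]
          exact mul_le_mul_of_nonneg_left h1 (hlam0 i)
      _ = (K : ℝ) * dist a b := by rw [← Finset.sum_mul, hlam1, one_mul]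
  -- a uniform bound on the vector fields over M
  obtain ⟨B, hB0, hB⟩ : ∃ B : ℝ, 0 ≤ B ∧ ∀ i, ∀ p ∈ M, ‖v i p‖ ≤ B := by
    obtain ⟨C, hC⟩ := hMc.exists_bound_of_continuousOn
      (f := fun p => ∑ i, ‖v i p‖)
      ((continuous_finset_sum _ fun i _ => ((hK i).continuous).norm).continuousOn)
    refine ⟨max C 0, le_max_right _ _, fun i p hp => ?_⟩
    have h1 : ‖v i p‖ ≤ ∑ j, ‖v j p‖ :=
      Finset.single_le_sum (f := fun j => ‖v j p‖) (fun j _ => norm_nonneg _)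
        (Finset.mem_univ i)
    have h2 : ∑ j, ‖v j p‖ ≤ ‖∑ j, ‖v j p‖‖ := le_abs_self _
    exact le_trans h1 (le_trans h2 (le_max_of_le_left (hC p hp)))
  have hBbar : ∀ p ∈ M, ‖vbar p‖ ≤ B := by
    intro p hp
    rw [hvbar]
    calc ‖∑ i, lam i • v i p‖ ≤ ∑ i, ‖lam i • v i p‖ := norm_sum_le _ _
      _ ≤ ∑ i, lam i * B := by
          apply Finset.sum_le_sum; intro i _
          rw [norm_smul, Real.norm_eq_abs, abs_of_nonneg (hlam0 i)]
          exact mul_le_mul_of_nonneg_left (hB i p hp) (hlam0 i)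
      _ = B := by rw [← Finset.sum_mul, hlam1, one_mul]
  set Kr : ℝ := (K : ℝ) with hKr
  have hKr0 : 0 ≤ Kr := K.coe_nonneg
  set B' : ℝ := B + Kr * B * exp Kr with hB'
  have hB'0 : 0 ≤ B' := by positivity
  set c : ℝ := Kr * B * exp Kr + Kr * B' with hcdef
  have hc0 : 0 ≤ c := by positivity
  set A : ℝ := n * c + Kr * B * exp Kr with hAdef
  have hA0 : 0 ≤ A := by positivity
  -- one composite Trotter step
  have step : ∀ p ∈ M, ∀ h : ℝ, 0 ≤ h → h ≤ 1 →
      ∃ q ∈ M, ‖q - p‖ ≤ h * B' ∧ ‖q - p - h • vbar p‖ ≤ (n * c) * h ^ 2 := by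
    intro p hp h h0 h1
    have main : ∀ m : ℕ, m ≤ n → ∃ q ∈ M,
        ‖q - p‖ ≤ (∑ i ∈ Finset.univ.filter (fun i : Fin n => (i : ℕ) < m), lam i) * (h * B') ∧
        ‖q - p - h • (∑ i ∈ Finset.univ.filter (fun i : Fin n => (i : ℕ) < m), lam i • v i p)‖
          ≤ m * c * h ^ 2 := by
      intro m
      induction m with
      | zero =>
        intro _
        refine ⟨p, hp, ?_, ?_⟩
        · have : Finset.univ.filter (fun i : Fin n => (i : ℕ) < 0) = ∅ := by
            ext i; simp
          simp [this]
        · have : Finset.univ.filter (fun i : Fin n => (i : ℕ) < 0) = ∅ := by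
            ext i; simp
          simp [this]
      | succ m ih =>
        intro hm1
        have hmn : m < n := hm1
        obtain ⟨q, hqM, hqmove, hqerr⟩ := ih (le_of_lt hmn)
        set im : Fin n := ⟨m, hmn⟩ with him
        set s : ℝ := lam im * h with hsdef
        have hs0 : 0 ≤ s := mul_nonneg (hlam0 im) h0
        have hs1 : s ≤ 1 := by
          calc s ≤ 1 * 1 := mul_le_mul (hlam_le_one im) h1 h0 zero_le_one
            _ = 1 := one_mul 1
        have hsh : s ≤ h := by
          calc s = lam im * h := rfl
            _ ≤ 1 * h := mul_le_mul_of_nonneg_right (hlam_le_one im) h0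
            _ = h := one_mul h
        set q' : EuclideanSpace ℝ (Fin d) := φ im s q with hq'
        have hq'M : q' ∈ M := hMinv im q hqM s hs0
        -- filtered-sum bookkeeping
        have hins : Finset.univ.filter (fun i : Fin n => (i : ℕ) < m + 1)
            = insert im (Finset.univ.filter (fun i : Fin n => (i : ℕ) < m)) := by
          ext i
          simp only [Finset.mem_filter, Finset.mem_univ, true_and, Finset.mem_insert,
            Fin.ext_iff, him, Fin.val_mk]
          omega
        have hnot : im ∉ Finset.univ.filter (fun i : Fin n => (i : ℕ) < m) := by
          simp [him]
        have hsum_le_one : ∀ F : Finset (Fin n), (∑ i ∈ F, lam i) ≤ 1 := by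
          intro F
          rw [← hlam1]
          exact Finset.sum_le_sum_of_subset_of_nonneg (Finset.subset_univ F)
            (fun i _ _ => hlam0 i)
        have hsum_nonneg : ∀ F : Finset (Fin n), 0 ≤ (∑ i ∈ F, lam i) :=
          fun F => Finset.sum_nonneg fun i _ => hlam0 i
        have hqp : ‖q - p‖ ≤ h * B' := by
          calc ‖q - p‖ ≤ (∑ i ∈ Finset.univ.filter (fun i : Fin n => (i : ℕ) < m), lam i)
              * (h * B') := hqmove
            _ ≤ 1 * (h * B') := by
                apply mul_le_mul_of_nonneg_right (hsum_le_one _) (by positivity)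
            _ = h * B' := one_mul _
        -- second-order expansion of the flow step
        have e1 : ‖q' - q - s • v im q‖ ≤ Kr * B * exp Kr * (s * h) := by
          have := sol_second_order (hK im) (hφt im q) hs0
          rw [hφ0 im q] at this
          calc ‖q' - q - s • v im q‖ ≤ Kr * ‖v im q‖ * s ^ 2 * exp (Kr * s) := this
            _ ≤ Kr * B * exp Kr * (s * h) := by
                have hv1 : ‖v im q‖ ≤ B := hB im q hqM
                have he1 : exp (Kr * s) ≤ exp Kr := by
                  apply exp_le_exp.2
                  calc Kr * s ≤ Kr * 1 := mul_le_mul_of_nonneg_left hs1 hKr0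
                    _ = Kr := mul_one _
                have hs2 : s ^ 2 ≤ s * h := by
                  rw [pow_two]
                  exact mul_le_mul_of_nonneg_left hsh hs0
                have h1' : Kr * ‖v im q‖ * s ^ 2 ≤ Kr * B * (s * h) := by
                  apply mul_le_mul
                  · exact mul_le_mul_of_nonneg_left hv1 hKr0
                  · exact hs2
                  · positivity
                  · positivity
                calc Kr * ‖v im q‖ * s ^ 2 * exp (Kr * s)
                    ≤ Kr * B * (s * h) * exp Kr := by
                      apply mul_le_mul h1' he1 (le_of_lt (exp_pos _)) (by positivity)
                  _ = Kr * B * exp Kr * (s * h) := by ring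
        have e1h : ‖q' - q - s • v im q‖ ≤ Kr * B * exp Kr * h ^ 2 := by
          refine le_trans e1 ?_
          have : s * h ≤ h * h := mul_le_mul_of_nonneg_right hsh h0
          calc Kr * B * exp Kr * (s * h) ≤ Kr * B * exp Kr * (h * h) := by
                apply mul_le_mul_of_nonneg_left this (by positivity)
            _ = Kr * B * exp Kr * h ^ 2 := by ring
        -- Lipschitz replacement of the base point
        have e2 : ‖s • v im q - s • v im p‖ ≤ Kr * B' * h ^ 2 := by
          rw [← smul_sub, norm_smul, Real.norm_eq_abs, abs_of_nonneg hs0]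
          have hlip : ‖v im q - v im p‖ ≤ Kr * ‖q - p‖ := by
            have := (hK im).dist_le_mul q p
            rw [dist_eq_norm, dist_eq_norm] at this
            exact this
          have hle2 : Kr * ‖q - p‖ ≤ Kr * (h * B') := mul_le_mul_of_nonneg_left hqp hKr0
          calc s * ‖v im q - v im p‖ ≤ h * (Kr * (h * B')) :=
              mul_le_mul hsh (le_trans hlip hle2) (norm_nonneg (v im q - v im p)) h0
            _ = Kr * B' * h ^ 2 := by ring
        -- movement bound for the new point
        have emove : ‖q' - q‖ ≤ lam im * (h * B') := by
          have h1' : ‖q' - q‖ ≤ ‖q' - q - s • v im q‖ + ‖s • v im q‖ := by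
            simpa using norm_add_le (q' - q - s • v im q) (s • v im q)
          have h2' : ‖s • v im q‖ ≤ s * B := by
            rw [norm_smul, Real.norm_eq_abs, abs_of_nonneg hs0]
            exact mul_le_mul_of_nonneg_left (hB im q hqM) hs0
          have h3' : Kr * B * exp Kr * (s * h) ≤ s * (Kr * B * exp Kr) := by
            have : s * h ≤ s * 1 := mul_le_mul_of_nonneg_left h1 hs0
            calc Kr * B * exp Kr * (s * h) ≤ Kr * B * exp Kr * (s * 1) := by
                  apply mul_le_mul_of_nonneg_left this (by positivity)
              _ = s * (Kr * B * exp Kr) := by ring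
          calc ‖q' - q‖ ≤ Kr * B * exp Kr * (s * h) + s * B := by
                have := le_trans h1' (add_le_add e1 h2')
                linarith
            _ ≤ s * (Kr * B * exp Kr) + s * B := by linarith
            _ = s * B' := by rw [hB']; ring
            _ = lam im * (h * B') := by rw [hsdef]; ring
        refine ⟨q', hq'M, ?_, ?_⟩
        · rw [hins, Finset.sum_insert hnot, add_mul]
          calc ‖q' - p‖ ≤ ‖q' - q‖ + ‖q - p‖ := norm_sub_le_norm_sub_add_norm_sub q' q p
            _ ≤ lam im * (h * B')
                + (∑ i ∈ Finset.univ.filter (fun i : Fin n => (i : ℕ) < m), lam i) * (h * B') :=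
                add_le_add emove hqmove
        · rw [hins, Finset.sum_insert hnot]
          have hdec : q' - p - h • (lam im • v im p
                + ∑ i ∈ Finset.univ.filter (fun i : Fin n => (i : ℕ) < m), lam i • v i p)
              = (q' - q - s • v im q) + (s • v im q - s • v im p)
                + (q - p - h • (∑ i ∈ Finset.univ.filter
                    (fun i : Fin n => (i : ℕ) < m), lam i • v i p)) := by
            rw [hsdef, smul_add, smul_smul, mul_comm (lam im) h]
            abel
          rw [hdec]
          calc ‖_ + _ + _‖ ≤ ‖(q' - q - s • v im q) + (s • v im q - s • v im p)‖
                + ‖q - p - h • (∑ i ∈ Finset.univ.filter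
                    (fun i : Fin n => (i : ℕ) < m), lam i • v i p)‖ := norm_add_le _ _
            _ ≤ (‖q' - q - s • v im q‖ + ‖s • v im q - s • v im p‖)
                + ‖q - p - h • (∑ i ∈ Finset.univ.filter
                    (fun i : Fin n => (i : ℕ) < m), lam i • v i p)‖ := by
                have := norm_add_le (q' - q - s • v im q) (s • v im q - s • v im p)
                linarith
            _ ≤ (Kr * B * exp Kr * h ^ 2 + Kr * B' * h ^ 2) + m * c * h ^ 2 := by
                have := add_le_add (add_le_add e1h e2) hqerr
                linarith
            _ = (m + 1 : ℕ) * c * h ^ 2 := by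
                rw [hcdef]; push_cast; ring
    obtain ⟨q, hqM, hqmove, hqerr⟩ := main n (le_refl n)
    have hfull : Finset.univ.filter (fun i : Fin n => (i : ℕ) < n) = Finset.univ := by
      ext i; simp [i.isLt]
    rw [hfull] at hqmove hqerr
    refine ⟨q, hqM, ?_, ?_⟩
    · calc ‖q - p‖ ≤ (∑ i, lam i) * (h * B') := hqmove
        _ = h * B' := by rw [hlam1, one_mul]
    · rw [← hvbar p] at hqerr
      exact hqerr
  -- main argument
  intro x hx t ht
  rcases eq_or_lt_of_le ht with h0 | htpos
  · rw [← h0, hφbar0]; exact hx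
  have hclosed : IsClosed M := hMc.isClosed
  -- key approximation for each k
  have key : ∀ k : ℕ, t ≤ k → ∃ p ∈ M,
      ‖φbar t x - p‖ ≤ A * t ^ 2 * exp (Kr * t) / k := by
    intro k hk
    have hk0 : (0:ℝ) < k := lt_of_lt_of_le htpos hk
    set h : ℝ := t / k with hh
    have h0 : 0 ≤ h := by positivity
    have h1 : h ≤ 1 := by rw [hh, div_le_one hk0]; exact hk
    have iter : ∀ j : ℕ, ∃ p ∈ M,
        ‖φbar ((j : ℝ) * h) x - p‖ ≤ (j : ℝ) * (A * h ^ 2) * exp (Kr * ((j : ℝ) * h)) := by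
      intro j
      induction j with
      | zero => exact ⟨x, hx, by simp [hφbar0]⟩
      | succ j ih =>
        obtain ⟨p, hpM, hpe⟩ := ih
        obtain ⟨q, hqM, _, hqe⟩ := step p hpM h h0 h1
        refine ⟨q, hqM, ?_⟩
        have hjh0 : (0:ℝ) ≤ (j : ℝ) * h := by positivity
        -- contraction between the true trajectory and the flow from p
        have hcontr : ‖φbar ((j : ℝ) * h + h) x - φbar h p‖
            ≤ ‖φbar ((j : ℝ) * h + 0) x - φbar 0 p‖ * exp (Kr * h) := by
          exact sol_contraction hKbar
            (sol_shift (hφbart x) hjh0) (hφbart p) h0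
        rw [add_zero, hφbar0] at hcontr
        -- second-order expansion of φbar from p
        have hexp2 : ‖φbar h p - p - h • vbar p‖ ≤ Kr * B * exp Kr * h ^ 2 := by
          have := sol_second_order hKbar (hφbart p) h0
          rw [hφbar0 p] at this
          rw [← hKr] at this
          refine le_trans this ?_
          have hv1 : ‖vbar p‖ ≤ B := hBbar p hpM
          have he1 : exp (Kr * h) ≤ exp Kr := by
            apply exp_le_exp.2
            calc Kr * h ≤ Kr * 1 := mul_le_mul_of_nonneg_left h1 hKr0
              _ = Kr := mul_one _
          calc Kr * ‖vbar p‖ * h ^ 2 * exp (Kr * h)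
              ≤ Kr * B * h ^ 2 * exp Kr := by
                apply mul_le_mul _ he1 (le_of_lt (exp_pos _)) (by positivity)
                apply mul_le_mul_of_nonneg_right _ (by positivity)
                exact mul_le_mul_of_nonneg_left hv1 hKr0
            _ = Kr * B * exp Kr * h ^ 2 := by ring
        have hq2 : ‖(p + h • vbar p) - q‖ ≤ (n : ℝ) * c * h ^ 2 := by
          have : (p + h • vbar p) - q = -(q - p - h • vbar p) := by abel
          rw [this, norm_neg]
          exact hqe
        have hsplit : ‖φbar ((j : ℝ) * h + h) x - q‖
            ≤ ‖φbar ((j : ℝ) * h + h) x - φbar h p‖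
              + ‖φbar h p - p - h • vbar p‖ + ‖(p + h • vbar p) - q‖ := by
          have hdec : φbar ((j : ℝ) * h + h) x - q
              = (φbar ((j : ℝ) * h + h) x - φbar h p)
                + (φbar h p - p - h • vbar p) + ((p + h • vbar p) - q) := by abel
          rw [hdec]
          calc ‖_ + _ + _‖ ≤ ‖(φbar ((j : ℝ) * h + h) x - φbar h p)
                + (φbar h p - p - h • vbar p)‖ + ‖(p + h • vbar p) - q‖ := norm_add_le _ _
            _ ≤ _ := by
                have := norm_add_le (φbar ((j : ℝ) * h + h) x - φbar h p)
                  (φbar h p - p - h • vbar p)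
                linarith
        have hcast : ((j + 1 : ℕ) : ℝ) * h = (j : ℝ) * h + h := by push_cast; ring
        rw [hcast]
        have hexp_ge : (1:ℝ) ≤ exp (Kr * ((j : ℝ) * h + h)) := by
          apply one_le_exp
          positivity
        have hexp_mul : exp (Kr * ((j : ℝ) * h)) * exp (Kr * h)
            = exp (Kr * ((j : ℝ) * h + h)) := by
          rw [← exp_add]; ring_nf
        have hAh : Kr * B * exp Kr * h ^ 2 + (n : ℝ) * c * h ^ 2 = A * h ^ 2 := by
          rw [hAdef]; ring
        calc ‖φbar ((j : ℝ) * h + h) x - q‖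
            ≤ ‖φbar ((j : ℝ) * h) x - p‖ * exp (Kr * h)
              + (Kr * B * exp Kr * h ^ 2 + (n : ℝ) * c * h ^ 2) := by
              have := add_le_add (add_le_add hcontr hexp2) hq2
              linarith [hsplit]
          _ ≤ ((j : ℝ) * (A * h ^ 2) * exp (Kr * ((j : ℝ) * h))) * exp (Kr * h)
              + A * h ^ 2 := by
              rw [hAh]
              have hle : ‖φbar ((j : ℝ) * h) x - p‖ * exp (Kr * h)
                  ≤ ((j : ℝ) * (A * h ^ 2) * exp (Kr * ((j : ℝ) * h))) * exp (Kr * h) :=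
                mul_le_mul_of_nonneg_right hpe (le_of_lt (exp_pos _))
              linarith
          _ ≤ (j : ℝ) * (A * h ^ 2) * exp (Kr * ((j : ℝ) * h + h))
              + A * h ^ 2 * exp (Kr * ((j : ℝ) * h + h)) := by
              have h1' : ((j : ℝ) * (A * h ^ 2) * exp (Kr * ((j : ℝ) * h))) * exp (Kr * h)
                  = (j : ℝ) * (A * h ^ 2) * exp (Kr * ((j : ℝ) * h + h)) := by
                rw [← hexp_mul]; ring
              have h2' : A * h ^ 2 ≤ A * h ^ 2 * exp (Kr * ((j : ℝ) * h + h)) := by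
                nlinarith [mul_nonneg (mul_nonneg hA0 (sq_nonneg h))
                  (sub_nonneg.2 hexp_ge)]
              linarith [h1'.le, h1'.ge]
          _ = ((j : ℝ) + 1) * (A * h ^ 2) * exp (Kr * ((j : ℝ) * h + h)) := by ring
          _ = ((j + 1 : ℕ) : ℝ) * (A * h ^ 2) * exp (Kr * ((j : ℝ) * h + h)) := by
              push_cast; ring
    obtain ⟨p, hpM, hpe⟩ := iter k
    have hkh : (k : ℝ) * h = t := by
      rw [hh]; field_simp
    rw [hkh] at hpe
    refine ⟨p, hpM, ?_⟩
    refine le_trans hpe (le_of_eq ?_)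
    rw [hh]; field_simp
  -- conclude via closedness
  have hmem : φbar t x ∈ closure M := by
    rw [Metric.mem_closure_iff]
    intro ε hε
    set D : ℝ := A * t ^ 2 * exp (Kr * t) with hD
    have hD0 : 0 ≤ D := by positivity
    obtain ⟨k, hk⟩ := exists_nat_gt (max t (D / ε))
    have hk1 : t ≤ k := le_of_lt (lt_of_le_of_lt (le_max_left _ _) hk)
    have hk2 : D / ε < k := lt_of_le_of_lt (le_max_right _ _) hk
    have hk0 : (0:ℝ) < k := lt_of_lt_of_le htpos hk1
    obtain ⟨p, hpM, hpe⟩ := key k hk1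
    refine ⟨p, hpM, ?_⟩
    rw [dist_eq_norm]
    apply lt_of_le_of_lt hpe
    rw [div_lt_iff₀ hk0]
    calc D = ε * (D / ε) := by field_simp
      _ < ε * k := by exact mul_lt_mul_of_pos_left hk2 hε
  rwa [hclosed.closure_eq] at hmem
end
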